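/- If {u_a}_{a=1}^{n²} is a unitary error basis of M_n(ℂ), then the projections P(u_a) := ∑_{i,j} E_{i,j} ⊗ (1/n) u_a^* E_{i,j} u_a sum to the identity: ∑_{a=1}^{n²} P(u_a) = I_n ⊗ I_n. -/

import Mathlib

open Matrix Kronecker

noncomputable def Pproj (n : ℕ) (u : Matrix (Fin n) (Fin n) ℂ) :
    Matrix (Fin n × Fin n) (Fin n × Fin n) ℂ :=
  ∑ i : Fin n, ∑ j : Fin n,
    (Matrix.single i j (1 : ℂ)) ⊗ₖ
      ((1 / (n : ℂ)) • (star u * Matrix.single i j (1 : ℂ) * u))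

lemma Pproj_apply (n : ℕ) (u : Matrix (Fin n) (Fin n) ℂ) (p q : Fin n × Fin n) :
    Pproj n u p q =
      (1 / (n : ℂ)) * ((starRingEnd ℂ) (u p.1 p.2) * u q.1 q.2) := by
  obtain ⟨i, k⟩ := p
  obtain ⟨j, l⟩ := q
  have hmid : ∀ i' j' : Fin n,
      (star u * Matrix.single i' j' (1 : ℂ) * u) k l =
        (starRingEnd ℂ) (u i' k) * u j' l := by
    intro i' j'
    rw [Matrix.mul_apply]
    simp [Matrix.mul_apply, Matrix.single, Matrix.star_apply, Finset.mul_sum,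
      ite_and, Finset.sum_ite_eq, mul_comm]
  simp only [Pproj, Finset.sum_apply, Matrix.sum_apply, Matrix.kroneckerMap_apply,
    Matrix.smul_apply, hmid, smul_eq_mul]
  rw [Finset.sum_comm]
  simp [Matrix.single, ite_and, Finset.sum_ite_eq, Finset.mul_sum]

/-- For a unitary error basis `{u_a}_{a=1}^{n²}`, the projections `P(u_a)` sum to
the identity of `M_n(ℂ) ⊗ M_n(ℂ)`. -/
theorem Pproj_sum_eq_one (n : ℕ) [NeZero n]
    (u : Fin (n ^ 2) → Matrix (Fin n) (Fin n) ℂ)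
    (hu : ∀ a, u a ∈ Matrix.unitaryGroup (Fin n) ℂ)
    (horth : ∀ a b, (1 / (n : ℂ)) * Matrix.trace (star (u a) * u b) =
      if a = b then 1 else 0) :
    ∑ a, Pproj n (u a) = (1 : Matrix (Fin n × Fin n) (Fin n × Fin n) ℂ) := by
  classical
  let e : Fin (n ^ 2) ≃ Fin n × Fin n :=
    (finCongr (pow_two n)).trans finProdFinEquiv.symm
  let M : Matrix (Fin (n ^ 2)) (Fin (n ^ 2)) ℂ :=
    fun a b => u a (e b).1 (e b).2
  have h1 : M * ((1 / (n : ℂ)) • Mᴴ) = 1 := by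
    ext a b
    rw [Matrix.mul_apply, Matrix.one_apply]
    have htr : Matrix.trace (star (u b) * u a) =
        ∑ p : Fin n × Fin n, (starRingEnd ℂ) (u b p.1 p.2) * u a p.1 p.2 := by
      rw [Matrix.trace, Fintype.sum_prod_type]
      simp [Matrix.diag, Matrix.mul_apply, Matrix.star_apply]
      rw [Finset.sum_comm]

    have := horth b a
    rw [htr] at this
    calc ∑ c, M a c * ((1 / (n : ℂ)) • Mᴴ) c b
        = (1 / (n : ℂ)) * ∑ c, (starRingEnd ℂ) (u b (e c).1 (e c).2) * u a (e c).1 (e c).2 := by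
          simp only [Matrix.smul_apply, Matrix.conjTranspose_apply, smul_eq_mul, M,
            Finset.mul_sum]
          congr 1; ext c; erw [Matrix.conjTranspose_apply]; simp only [Complex.star_def]; ring
      _ = (1 / (n : ℂ)) * ∑ p : Fin n × Fin n, (starRingEnd ℂ) (u b p.1 p.2) * u a p.1 p.2 := by
          rw [← Equiv.sum_comp e (fun p => (starRingEnd ℂ) (u b p.1 p.2) * u a p.1 p.2)]
      _ = if a = b then 1 else 0 := by rw [this]; simp [eq_comm]
  have h2 : ((1 / (n : ℂ)) • Mᴴ) * M = 1 := mul_eq_one_comm.mp h1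
  ext p q
  have := congrFun (congrFun h2 (e.symm p)) (e.symm q)
  simp only [Matrix.mul_apply, Matrix.smul_apply, Matrix.conjTranspose_apply,
    smul_eq_mul, M, Equiv.apply_symm_apply] at this
  rw [Matrix.sum_apply]
  simp only [Pproj_apply]
  rw [Matrix.one_apply]
  have hiff : (e.symm p = e.symm q) ↔ p = q := e.symm.injective.eq_iff
  simp only [Matrix.one_apply, hiff] at this
  rw [← this]
  refine Finset.sum_congr rfl fun a _ => ?_
  simp only [Matrix.smul_apply, Matrix.conjTranspose_apply, Complex.star_def, smul_eq_mul]
  erw [Matrix.conjTranspose_apply]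
  simp only [Complex.star_def, Equiv.apply_symm_apply]
  ring
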